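/- Let D be a continuous discount function satisfying the extended weak one-switch property. Then for every difference function Δ of D, the set {σ ≥ 0 : Δ(σ) = 0} is a closed interval (possibly empty): it is closed in [0,∞) and contains every point between any two of its points. -/

import Mathlib

def IsDiscount (D : ℝ → ℝ) : Prop :=
  D 0 = 1 ∧ (∀ t, 0 ≤ t → 0 < D t) ∧ StrictAntiOn D (Set.Ici 0) ∧
    Filter.Tendsto D Filter.atTop (nhds 0)

noncomputable def diffFn {n m : ℕ} (D : ℝ → ℝ) (t : Fin n → ℝ) (s : Fin m → ℝ)
    (v : Fin n → ℝ) (w : Fin m → ℝ) : ℝ → ℝ :=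
  fun σ => (∑ i, D (t i + σ) * v i) - (∑ j, D (s j + σ) * w j)

def DoubleSwitch (Δ : ℝ → ℝ) : Prop :=
  ∃ σ₁ σ₂ σ₃ : ℝ, 0 ≤ σ₁ ∧ σ₁ < σ₂ ∧ σ₂ < σ₃ ∧
    ((0 < Δ σ₁ ∧ Δ σ₂ < 0 ∧ 0 < Δ σ₃) ∨ (Δ σ₁ < 0 ∧ 0 < Δ σ₂ ∧ Δ σ₃ < 0))

def ExtWeakOneSwitch (D : ℝ → ℝ) : Prop :=
  ∀ (n m : ℕ), 0 < n → 0 < m →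
    ∀ (t : Fin n → ℝ) (s : Fin m → ℝ) (v : Fin n → ℝ) (w : Fin m → ℝ),
      StrictMono t → StrictMono s → (∀ i, 0 ≤ t i) → (∀ j, 0 ≤ s j) →
      (∀ i, 0 ≤ v i) → (∀ j, 0 ≤ w j) → ¬ DoubleSwitch (diffFn D t s v w)

-- auxiliary: bumping one weight on the w-side
lemma diffFn_bump_w {n m : ℕ} (D : ℝ → ℝ) (t : Fin n → ℝ) (s : Fin m → ℝ)
    (v : Fin n → ℝ) (w : Fin m → ℝ) (j0 : Fin m) (ε : ℝ) (σ : ℝ) :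
    diffFn D t s v (fun j => w j + if j = j0 then ε else 0) σ
      = diffFn D t s v w σ - D (s j0 + σ) * ε := by
  simp only [diffFn, mul_add, Finset.sum_add_distrib, mul_ite, mul_zero]
  rw [Finset.sum_ite_eq' Finset.univ j0 (fun j => D (s j + σ) * ε)]
  simp; ring

lemma diffFn_bump_v {n m : ℕ} (D : ℝ → ℝ) (t : Fin n → ℝ) (s : Fin m → ℝ)
    (v : Fin n → ℝ) (w : Fin m → ℝ) (i0 : Fin n) (ε : ℝ) (σ : ℝ) :
    diffFn D t s (fun i => v i + if i = i0 then ε else 0) w σ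
      = diffFn D t s v w σ + D (t i0 + σ) * ε := by
  simp only [diffFn, mul_add, Finset.sum_add_distrib, mul_ite, mul_zero]
  rw [Finset.sum_ite_eq' Finset.univ i0 (fun i => D (t i + σ) * ε)]
  simp; ring

theorem weak_one_switch_zero_set_closed_interval (D : ℝ → ℝ) (hD : IsDiscount D)
    (hcont : ContinuousOn D (Set.Ici 0)) (hW : ExtWeakOneSwitch D)
    (n m : ℕ) (hn : 0 < n) (hm : 0 < m)
    (t : Fin n → ℝ) (s : Fin m → ℝ) (v : Fin n → ℝ) (w : Fin m → ℝ)
    (ht : StrictMono t) (hs : StrictMono s) (ht0 : ∀ i, 0 ≤ t i) (hs0 : ∀ j, 0 ≤ s j)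
    (hv : ∀ i, 0 ≤ v i) (hw : ∀ j, 0 ≤ w j) :
    IsClosed {σ : ℝ | 0 ≤ σ ∧ diffFn D t s v w σ = 0} ∧
      ∀ σa σb σc : ℝ,
        σa ∈ {σ : ℝ | 0 ≤ σ ∧ diffFn D t s v w σ = 0} →
        σb ∈ {σ : ℝ | 0 ≤ σ ∧ diffFn D t s v w σ = 0} →
        σa ≤ σc → σc ≤ σb →
        σc ∈ {σ : ℝ | 0 ≤ σ ∧ diffFn D t s v w σ = 0} := by
  obtain ⟨hD1, hDpos, hDanti, hDlim⟩ := hD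
  constructor
  · -- closedness
    have hΔcont : ContinuousOn (diffFn D t s v w) (Set.Ici 0) := by
      apply ContinuousOn.sub
      · apply continuousOn_finset_sum
        intro i _
        apply ContinuousOn.mul _ continuousOn_const
        apply hcont.comp (Continuous.continuousOn (by continuity))
        intro σ hσ
        exact add_nonneg (ht0 i) hσ
      · apply continuousOn_finset_sum
        intro j _
        apply ContinuousOn.mul _ continuousOn_const
        apply hcont.comp (Continuous.continuousOn (by continuity))
        intro σ hσ
        exact add_nonneg (hs0 j) hσ
    have : {σ : ℝ | 0 ≤ σ ∧ diffFn D t s v w σ = 0}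
        = Set.Ici 0 ∩ (diffFn D t s v w) ⁻¹' {0} := by
      ext σ; simp [Set.mem_Ici]
    rw [this]
    exact hΔcont.preimage_isClosed_of_isClosed isClosed_Ici isClosed_singleton
  · rintro σa σb σc ⟨ha0, haz⟩ ⟨hb0, hbz⟩ hac hcb
    have hc0 : 0 ≤ σc := le_trans ha0 hac
    refine ⟨hc0, ?_⟩
    by_contra hne
    rcases lt_or_gt_of_ne hne with hneg | hpos
    ·
      set i0 : Fin n := ⟨0, hn⟩
      have hDc : 0 < D (t i0 + σc) := hDpos _ (add_nonneg (ht0 i0) hc0)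
      set ε : ℝ := -diffFn D t s v w σc / (2 * D (t i0 + σc)) with hε
      have hεpos : 0 < ε := div_pos (by linarith) (by linarith)
      have hac' : σa < σc := lt_of_le_of_ne hac (by rintro rfl; exact absurd haz (ne_of_lt hneg))
      have hcb' : σc < σb := lt_of_le_of_ne hcb (by rintro rfl; exact absurd hbz.symm (ne_of_gt hneg))
      apply hW n m hn hm t s (fun i => v i + if i = i0 then ε else 0) w ht hs ht0 hs0
        (fun i => add_nonneg (hv i) (by positivity)) hw
      refine ⟨σa, σc, σb, ha0, hac', hcb', Or.inl ⟨?_, ?_, ?_⟩⟩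
      · rw [diffFn_bump_v, haz]
        have : 0 < D (t i0 + σa) := hDpos _ (add_nonneg (ht0 i0) ha0)
        positivity
      · rw [diffFn_bump_v]
        have : D (t i0 + σc) * ε = -diffFn D t s v w σc / 2 := by
          rw [hε]; field_simp
        rw [this]; linarith
      · rw [diffFn_bump_v, hbz]
        have : 0 < D (t i0 + σb) := hDpos _ (add_nonneg (ht0 i0) hb0)
        positivity
    · -- Δ σc > 0 : bump w at j0
      set j0 : Fin m := ⟨0, hm⟩
      have hDc : 0 < D (s j0 + σc) := hDpos _ (add_nonneg (hs0 j0) hc0)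
      set ε : ℝ := diffFn D t s v w σc / (2 * D (s j0 + σc)) with hε
      have hεpos : 0 < ε := div_pos (by linarith) (by linarith)
      have hac' : σa < σc := lt_of_le_of_ne hac (by rintro rfl; exact absurd haz (ne_of_gt hpos))
      have hcb' : σc < σb := lt_of_le_of_ne hcb (by rintro rfl; exact absurd hbz.symm (ne_of_lt hpos))
      apply hW n m hn hm t s v (fun j => w j + if j = j0 then ε else 0) ht hs ht0 hs0 hv
        (fun j => add_nonneg (hw j) (by positivity))
      refine ⟨σa, σc, σb, ha0, hac', hcb', Or.inr ⟨?_, ?_, ?_⟩⟩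
      · rw [diffFn_bump_w, haz]
        have : 0 < D (s j0 + σa) := hDpos _ (add_nonneg (hs0 j0) ha0)
        simp only [zero_sub, neg_neg]
        nlinarith
      · rw [diffFn_bump_w]
        have : D (s j0 + σc) * ε = diffFn D t s v w σc / 2 := by
          rw [hε]; field_simp
        rw [this]; linarith
      · rw [diffFn_bump_w, hbz]
        have : 0 < D (s j0 + σb) := hDpos _ (add_nonneg (hs0 j0) hb0)
        nlinarith
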